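/- Let n = 2b, let Φ be an n×n real matrix, let X(0), V ⊆ ℝⁿ be nonempty sets, and define X(k+1) = Φ X(k) ⊕ V. For each j let X̂_j(0) ⊆ ℝ² satisfy π_j X(0) ⊆ X̂_j(0). Define, for i = 1, …, b, Ŵ_i(0) = {0} ⊆ ℝ², Ŵ_i(k+1) = Ŵ_i(k) ⊕ R_i(Φᵏ)·V, where R_i(Φᵏ) is the 2×n block-row of Φᵏ formed by rows 2i−1, 2i, and X̂_i(k) = (Φᵏ_{i1} X̂₁(0) ⊕ ⋯ ⊕ Φᵏ_{ib} X̂_b(0)) ⊕ Ŵ_i(k), where Φᵏ_{ij} is the (i,j) 2×2 block of Φᵏ. Then the decomposed recurrence is sound: X(k) ⊆ X̂₁(k) × ⋯ × X̂_b(k) for every k ≥ 0. -/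
import Mathlib


open Set Pointwise Matrix

noncomputable section

/-- The `p`-norm on `ι → ℝ`. -/
def pnorm {ι : Type} [Fintype ι] (p : ℝ) (x : ι → ℝ) : ℝ :=
  (∑ i, |x i| ^ p) ^ (1 / p)

/-- Dot product. -/
def dotp {ι : Type} [Fintype ι] (x y : ι → ℝ) : ℝ := ∑ i, x i * y i

/-- Support function of a set. -/
def suppF {ι : Type} [Fintype ι] (X : Set (ι → ℝ)) (ℓ : ι → ℝ) : ℝ :=
  sSup (dotp ℓ '' X)

/-- Closed unit ball of the `p`-norm. -/
def pball (ι : Type) [Fintype ι] (p : ℝ) : Set (ι → ℝ) := {x | pnorm p x ≤ 1}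

/-- Hausdorff distance with respect to the `p`-norm. -/
def hausP {ι : Type} [Fintype ι] (p : ℝ) (X Y : Set (ι → ℝ)) : ℝ :=
  sInf {ε | 0 ≤ ε ∧ X ⊆ Y + ε • pball ι p ∧ Y ⊆ X + ε • pball ι p}

/-- Image of a set under a matrix. -/
def mapSet {ι κ : Type} [Fintype ι] [Fintype κ] (M : Matrix ι κ ℝ) (S : Set (κ → ℝ)) :
    Set (ι → ℝ) := M.mulVec '' S

/-- Induced matrix `p`-norm. -/
def matP {ι κ : Type} [Fintype ι] [Fintype κ] (p : ℝ) (M : Matrix ι κ ℝ) : ℝ :=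
  sSup {r | ∃ x : κ → ℝ, pnorm p x ≤ 1 ∧ r = pnorm p (M.mulVec x)}

/-- Diameter of a planar set with respect to the dual exponent `q`:
the smallest `Δ ≥ 0` with `ρ_Y(d) + ρ_Y(-d) ≤ ‖d‖_q * Δ` for all `d`. -/
def diamP (q : ℝ) (Y : Set (Fin 2 → ℝ)) : ℝ :=
  sInf {Δ | 0 ≤ Δ ∧ ∀ d : Fin 2 → ℝ, suppF Y d + suppF Y (-d) ≤ pnorm q d * Δ}

/-- The 2×2 block of `Φ` in block-row `i` and block-column `j`. -/
def blk {b : ℕ} (Φ : Matrix (Fin b × Fin 2) (Fin b × Fin 2) ℝ) (i j : Fin b) :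
    Matrix (Fin 2) (Fin 2) ℝ := fun r c => Φ (i, r) (j, c)

/-- The 2×n row-block of `Φ` formed by the rows of block `i`. -/
def rowBlk {b : ℕ} (Φ : Matrix (Fin b × Fin 2) (Fin b × Fin 2) ℝ) (i : Fin b) :
    Matrix (Fin 2) (Fin b × Fin 2) ℝ := fun r c => Φ (i, r) c

/-- Projection `π_i` onto the `i`-th block of coordinates. -/
def projB {b : ℕ} (i : Fin b) (x : Fin b × Fin 2 → ℝ) : Fin 2 → ℝ := fun r => x (i, r)

/-- Cartesian product of a family of planar sets, as a subset of `ℝⁿ` (`n = 2b`). -/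
def prodSet {b : ℕ} (Xh : Fin b → Set (Fin 2 → ℝ)) : Set (Fin b × Fin 2 → ℝ) :=
  {x | ∀ i, projB i x ∈ Xh i}

/-- Cartesian decomposition `D̂(X) = π₁X × ⋯ × π_b X`. -/
def cartD {b : ℕ} (X : Set (Fin b × Fin 2 → ℝ)) : Set (Fin b × Fin 2 → ℝ) :=
  prodSet (fun i => projB i '' X)

/-- Decomposed image: `X̂'_i = ⨁_j Φ_{ij} X̂_j`. -/
def dimg {b : ℕ} (Φ : Matrix (Fin b × Fin 2) (Fin b × Fin 2) ℝ)
    (Xh : Fin b → Set (Fin 2 → ℝ)) : Fin b → Set (Fin 2 → ℝ) :=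
  fun i => ∑ j, mapSet (blk Φ i j) (Xh j)



lemma projB_mulVec {b : ℕ} (i : Fin b) (M : Matrix (Fin b × Fin 2) (Fin b × Fin 2) ℝ)
    (x : Fin b × Fin 2 → ℝ) :
    projB i (M.mulVec x) = (rowBlk M i).mulVec x := rfl

lemma rowBlk_mulVec_eq_sum {b : ℕ} (i : Fin b) (M : Matrix (Fin b × Fin 2) (Fin b × Fin 2) ℝ)
    (x : Fin b × Fin 2 → ℝ) :
    (rowBlk M i).mulVec x = ∑ j, (blk M i j).mulVec (projB j x) := by
  funext r
  simp only [Finset.sum_apply, Matrix.mulVec, dotProduct, rowBlk, blk, projB]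
  rw [Fintype.sum_prod_type]

lemma projB_finsum {b : ℕ} (i : Fin b) (s : Finset ℕ) (f : ℕ → (Fin b × Fin 2 → ℝ)) :
    projB i (∑ m ∈ s, f m) = ∑ m ∈ s, projB i (f m) := by
  funext r
  simp [projB, Finset.sum_apply]

/-- soundness of the decomposed recurrence with constant input set:
`X(k) ⊆ X̂₁(k) × ⋯ × X̂_b(k)` for every `k`, where
`Ŵ_i(k+1) = Ŵ_i(k) ⊕ R_i(Φᵏ)·V` and
`X̂_i(k) = (⨁_j Φᵏ_{ij} X̂_j(0)) ⊕ Ŵ_i(k)`. -/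
theorem decomposed_recurrence_sound_constant {b : ℕ}
    (Φ : Matrix (Fin b × Fin 2) (Fin b × Fin 2) ℝ)
    (X : ℕ → Set (Fin b × Fin 2 → ℝ)) (V : Set (Fin b × Fin 2 → ℝ))
    (hX0ne : (X 0).Nonempty) (hVne : V.Nonempty)
    (hX : ∀ k, X (k + 1) = mapSet Φ (X k) + V)
    (Xh0 : Fin b → Set (Fin 2 → ℝ))
    (hXh0 : ∀ j, projB j '' X 0 ⊆ Xh0 j)
    (Wh : Fin b → ℕ → Set (Fin 2 → ℝ))
    (hWh0 : ∀ i, Wh i 0 = {0})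
    (hWhs : ∀ i k, Wh i (k + 1) = Wh i k + mapSet (rowBlk (Φ ^ k) i) V)
    (Xh : Fin b → ℕ → Set (Fin 2 → ℝ))
    (hXh : ∀ i k, Xh i k = (∑ j, mapSet (blk (Φ ^ k) i j) (Xh0 j)) + Wh i k) :
    ∀ k, X k ⊆ prodSet (fun i => Xh i k) := by
  -- representation of X k
  have repr : ∀ k, ∀ x ∈ X k, ∃ x0 ∈ X 0, ∃ v : ℕ → (Fin b × Fin 2 → ℝ),
      (∀ m < k, v m ∈ V) ∧
      x = (Φ ^ k).mulVec x0 + ∑ m ∈ Finset.range k, (Φ ^ m).mulVec (v m) := by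
    intro k
    induction k with
    | zero =>
      intro x hx
      exact ⟨x, hx, fun _ => hVne.choose, fun m hm => absurd hm (Nat.not_lt_zero m), by
        simp [Matrix.one_mulVec]⟩
    | succ k ih =>
      intro x hx
      rw [hX k] at hx
      obtain ⟨y, hy, w, hw, rfl⟩ := Set.mem_add.mp hx
      obtain ⟨z, hz, rfl⟩ := hy
      obtain ⟨x0, hx0, v, hv, hzrep⟩ := ih z hz
      refine ⟨x0, hx0, fun m => if m = 0 then w else v (m - 1), ?_, ?_⟩
      · intro m _
        rcases Nat.eq_zero_or_pos m with h | h
        · simp [h, hw]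
        · simpa [Nat.pos_iff_ne_zero.mp h] using hv (m - 1) (by omega)
      · rw [hzrep, Matrix.mulVec_add, Matrix.mulVec_mulVec, ← pow_succ',
          Finset.sum_range_succ']
        simp only [if_pos rfl, Nat.add_sub_cancel]
        have hsum : Φ *ᵥ ∑ m ∈ Finset.range k, (Φ ^ m) *ᵥ v m =
            ∑ m ∈ Finset.range k, (Φ ^ (m + 1)) *ᵥ v m := by
          have h := map_sum (Matrix.mulVecLin Φ) (fun m => (Φ ^ m) *ᵥ v m) (Finset.range k)
          simp only [Matrix.mulVecLin_apply] at h
          rw [h]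
          exact Finset.sum_congr rfl fun m _ => by
            rw [Matrix.mulVec_mulVec, ← pow_succ']
        rw [hsum]
        have : ∀ m ∈ Finset.range k,
            (Φ ^ (m + 1)).mulVec (if m + 1 = 0 then w else v m) = (Φ ^ (m + 1)).mulVec (v m) := by
          intro m _; simp
        rw [Finset.sum_congr rfl this, pow_zero, Matrix.one_mulVec]
        simp only [if_true]
        rw [add_assoc]
  -- membership of the accumulated sum in Wh
  have whmem : ∀ (i : Fin b) (k : ℕ) (v : ℕ → (Fin b × Fin 2 → ℝ)), (∀ m < k, v m ∈ V) →
      (∑ m ∈ Finset.range k, (rowBlk (Φ ^ m) i).mulVec (v m)) ∈ Wh i k := by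
    intro i k
    induction k with
    | zero => intro v _; simp [hWh0]
    | succ k ih =>
      intro v hv
      rw [hWhs, Finset.sum_range_succ]
      exact Set.add_mem_add (ih v fun m hm => hv m (by omega))
        ⟨v k, hv k (by omega), rfl⟩
  intro k x hx i
  obtain ⟨x0, hx0, v, hv, rfl⟩ := repr k x hx
  show projB i _ ∈ Xh i k
  rw [hXh]
  have h1 : projB i ((Φ ^ k).mulVec x0 + ∑ m ∈ Finset.range k, (Φ ^ m).mulVec (v m)) =
      (∑ j, (blk (Φ ^ k) i j).mulVec (projB j x0)) +
        ∑ m ∈ Finset.range k, (rowBlk (Φ ^ m) i).mulVec (v m) := by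
    have : projB i ((Φ ^ k).mulVec x0 + ∑ m ∈ Finset.range k, (Φ ^ m).mulVec (v m)) =
        projB i ((Φ ^ k).mulVec x0) +
          projB i (∑ m ∈ Finset.range k, (Φ ^ m).mulVec (v m)) := rfl
    rw [this, projB_mulVec, rowBlk_mulVec_eq_sum, projB_finsum]
    congr 1
  show projB i _ ∈ _
  rw [h1]
  refine Set.add_mem_add ?_ (whmem i k v hv)
  exact Set.finset_sum_mem_finset_sum _ _ _
    fun j _ => ⟨projB j x0, hXh0 j ⟨x0, hx0, rfl⟩, rfl⟩


end
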